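/- (Higman's Lemma) If (Q,≤) is a well-quasi-order, then the subsequence-embedding order on finite sequences Q* — where x ≤ y iff there is a strictly increasing map f from indices of x to indices of y with xᵢ ≤ y_{f(i)} for all i — is a well-quasi-order. -/

import Mathlib

/-- A well-quasi-order. -/
def IsWQO {S : Type*} (le : S → S → Prop) : Prop :=
  Reflexive le ∧ Transitive le ∧ ∀ f : ℕ → S, ∃ i j : ℕ, i < j ∧ le (f i) (f j)

/-- Subsequence-embedding order on finite sequences over `(Q, le)`. -/
def ListEmb {Q : Type*} (le : Q → Q → Prop) (x y : List Q) : Prop :=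
  ∃ f : Fin x.length → Fin y.length, StrictMono f ∧ ∀ i, le (x.get i) (y.get (f i))

theorem sublistForall₂_listEmb {Q : Type*} {le : Q → Q → Prop} {x y : List Q}
    (h : List.SublistForall₂ le x y) : ListEmb le x y := by
  obtain ⟨l, hf, hs⟩ := List.sublistForall₂_iff.1 h
  obtain ⟨g, hg⟩ := List.sublist_iff_exists_fin_orderEmbedding_get_eq.1 hs
  have hlen := hf.length_eq
  refine ⟨fun i => g ⟨i, hlen ▸ i.2⟩, fun a b hab => g.strictMono (by simpa using hab), ?_⟩
  intro i
  rw [← hg]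
  exact hf.get i.2 _

/-- Higman's Lemma. -/
theorem higman {Q : Type*} (le : Q → Q → Prop) (hwqo : IsWQO le) :
    IsWQO (ListEmb le) := by
  obtain ⟨hrefl, htrans, hseq⟩ := hwqo
  refine ⟨?_, ?_, ?_⟩
  · intro x
    exact ⟨id, strictMono_id, fun i => hrefl _⟩
  · rintro x y z ⟨f, hf, hfle⟩ ⟨g, hg, hgle⟩
    exact ⟨g ∘ f, hg.comp hf, fun i => htrans (hfle i) (hgle (f i))⟩
  · intro f
    haveI : IsRefl Q le := ⟨hrefl⟩
    haveI : IsTrans Q le := ⟨htrans⟩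
    haveI : IsPreorder Q le := {}
    have hpwo : (Set.univ : Set Q).PartiallyWellOrderedOn le := by
      rw [Set.partiallyWellOrderedOn_iff_exists_lt]
      intro g _
      obtain ⟨i, j, hij, h⟩ := hseq g
      exact ⟨i, j, hij, h⟩
    have := hpwo.partiallyWellOrderedOn_sublistForall₂ le
    obtain ⟨i, j, hij, h⟩ := this.exists_lt (f := f) (fun n => by simp)
    exact ⟨i, j, hij, sublistForall₂_listEmb h⟩
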